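/- Let (λ_1,…,λ_p; π_0,π_1,…,π_p) be a spectral system for A, suppose t_0 ∈ ℕ satisfies A^{t_0}·π_0 = 0 and for each j = 1,…,p there is t_j ∈ ℕ with (A − λ_j·1)^{t_j}·π_j = 0. Then for every natural number k ≥ 1, setting S := ∑_{j=1}^{p} λ_j^k · π_j, the following hold: (i) there exist an invertible n×n matrix P and a function d : n → F such that S = P · diagonal(d) · P⁻¹; (ii) A^k − S is nilpotent; (iii) S·A^k = A^k·S. -/

import Mathlib

open Finset

open Matrix Polynomial


theorem aux_diag_spectral {F : Type*} [Field F] {n : Type*} [Fintype n] [DecidableEq n]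
    {ι : Type*} [Fintype ι] [DecidableEq ι] (π : ι → Matrix n n F) (μ : ι → F)
    (hsum : ∑ a, π a = 1)
    (horth : ∀ a b, a ≠ b → π a * π b = 0)
    (hidem : ∀ a, π a * π a = π a) :
    ∃ P : Matrix n n F, IsUnit P ∧ ∃ d : n → F,
      (∑ a, μ a • π a) = P * Matrix.diagonal d * P⁻¹ := by
  classical
  set S : Matrix n n F := ∑ a, μ a • π a with hS
  set V : ι → Submodule F (n → F) := fun a => LinearMap.range (π a).mulVecLin with hV
  have hSπ : ∀ a, S * π a = μ a • π a := by
    intro a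
    rw [hS, Finset.sum_mul]
    rw [Finset.sum_eq_single a]
    · rw [smul_mul_assoc, hidem]
    · intro b _ hb
      rw [smul_mul_assoc, horth b a hb, smul_zero]
    · simp
  have hmem : ∀ a v, v ∈ V a → (π a) *ᵥ v = v := by
    rintro a v ⟨w, rfl⟩
    rw [mulVecLin_apply, mulVec_mulVec, hidem]
  have hker : ∀ a b, a ≠ b → ∀ v ∈ V b, (π a) *ᵥ v = 0 := by
    rintro a b hab v ⟨w, rfl⟩
    rw [mulVecLin_apply, mulVec_mulVec, horth a b hab, zero_mulVec]
  have heig : ∀ a v, v ∈ V a → S *ᵥ v = μ a • v := by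
    rintro a v ⟨w, rfl⟩
    rw [mulVecLin_apply, mulVec_mulVec, hSπ a, smul_mulVec]
  have hinternal : DirectSum.IsInternal V := by
    rw [DirectSum.isInternal_submodule_iff_iSupIndep_and_iSup_eq_top]
    constructor
    · intro a
      rw [Submodule.disjoint_def]
      intro v hva hvrest
      have h1 : v = π a *ᵥ v := (hmem a v hva).symm
      have h2 : (⨆ b, ⨆ (_ : b ≠ a), V b) ≤ LinearMap.ker (π a).mulVecLin := by
        refine iSup₂_le fun b hb => ?_
        intro w hw
        exact LinearMap.mem_ker.mpr (hker a b (Ne.symm hb) w hw)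
      have := h2 hvrest
      rw [LinearMap.mem_ker, mulVecLin_apply] at this
      rw [h1, this]
    · rw [eq_top_iff]
      intro v _
      have hv : v = ∑ a, π a *ᵥ v := by
        have h1 : (∑ a, π a) *ᵥ v = v := by rw [hsum, one_mulVec]
        have h2 : (∑ a, π a) *ᵥ v = ∑ a, π a *ᵥ v := by
          ext i
          rw [Finset.sum_apply]
          simp only [mulVec, dotProduct, Matrix.sum_apply, Finset.sum_mul]
          exact Finset.sum_comm
        exact h1.symm.trans h2
      rw [hv]
      exact Submodule.sum_mem _ fun a _ =>
        Submodule.mem_iSup_of_mem a ⟨v, rfl⟩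
  have : ∀ a, Module.Finite F (V a) := fun a => inferInstance
  let bV : ∀ a, Module.Basis (Fin (Module.finrank F (V a))) F (V a) :=
    fun a => Module.finBasis F (V a)
  let b0 := hinternal.collectedBasis bV
  let e := b0.indexEquiv (Pi.basisFun F n)
  let b := b0.reindex e
  let d : n → F := fun i => μ (e.symm i).1
  have hbd : ∀ i, S *ᵥ b i = d i • b i := by
    intro i
    have : b i = b0 (e.symm i) := Module.Basis.reindex_apply b0 e i
    rw [this]
    exact heig _ _ (hinternal.collectedBasis_mem bV (e.symm i))
  let P := (Pi.basisFun F n).toMatrix b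
  have hPinv : Invertible P := (Pi.basisFun F n).invertibleToMatrix b
  have hPunit : IsUnit P := isUnit_of_invertible P
  refine ⟨P, hPunit, d, ?_⟩
  have hPij : ∀ i j, P i j = b j i := by
    intro i j
    show (Pi.basisFun F n).toMatrix (⇑b) i j = b j i
    rw [Module.Basis.toMatrix_apply, Pi.basisFun_repr]
  have key : S * P = P * Matrix.diagonal d := by
    ext i j
    rw [mul_diagonal, mul_apply]
    have h2 : ∑ k, S i k * P k j = (S *ᵥ b j) i := by
      simp only [mulVec, dotProduct, hPij]
    rw [h2, hbd j, Pi.smul_apply, smul_eq_mul, hPij, mul_comm]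
  have hPP : P * P⁻¹ = 1 :=
    mul_nonsing_inv P ((Matrix.isUnit_iff_isUnit_det P).mp hPunit)
  calc S = S * (P * P⁻¹) := by rw [hPP, mul_one]
    _ = (S * P) * P⁻¹ := by rw [mul_assoc]
    _ = P * Matrix.diagonal d * P⁻¹ := by rw [key]

/-- Jordan–Chevalley-type decomposition of the powers of `A`: for `k ≥ 1`, the matrix
`S = ∑_j λ_j^k π_j` is diagonalizable, `A^k - S` is nilpotent, and `S` commutes with `A^k`. -/
theorem pow_jordan_chevalley_decomposition
    (F : Type*) [Field F] (n : Type*) [Fintype n] [DecidableEq n] [Nonempty n]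
    (A : Matrix n n F) (p : ℕ)
    (lam : Fin p → F) (π : Fin (p + 1) → Matrix n n F)
    (hlam : ∀ j, lam j ≠ 0)
    (hsum : ∑ a, π a = 1)
    (horth : ∀ a b, a ≠ b → π a * π b = 0)
    (hidem : ∀ a, π a * π a = π a)
    (hcomm : ∀ a, A * π a = π a * A)
    (t₀ : ℕ) (ht₀ : A ^ t₀ * π 0 = 0)
    (t : Fin p → ℕ)
    (htz : ∀ j : Fin p, (A - lam j • 1) ^ (t j) * π j.succ = 0) :
    ∀ k : ℕ, 1 ≤ k →
      (∃ P : Matrix n n F, IsUnit P ∧ ∃ d : n → F,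
          (∑ j : Fin p, lam j ^ k • π j.succ) = P * Matrix.diagonal d * P⁻¹) ∧
      IsNilpotent (A ^ k - ∑ j : Fin p, lam j ^ k • π j.succ) ∧
      (∑ j : Fin p, lam j ^ k • π j.succ) * A ^ k =
        A ^ k * ∑ j : Fin p, lam j ^ k • π j.succ := by
  intro k hk
  classical
  set S : Matrix n n F := ∑ j : Fin p, lam j ^ k • π j.succ with hSdef
  -- eigenvalue function including 0 for π 0
  set μ : Fin (p + 1) → F := Fin.cases 0 (fun j => lam j ^ k) with hμ
  have hSfull : (∑ a : Fin (p + 1), μ a • π a) = S := by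
    rw [Fin.sum_univ_succ]
    simp [hμ]
    rfl
  -- commutation of A with the projections, as Commute
  have hcA : ∀ a, Commute A (π a) := fun a => hcomm a
  have hcAk : ∀ a, Commute (A ^ k) (π a) := fun a => (hcA a).pow_left k
  -- S * π a = μ a • π a and π a * S = μ a • π a
  have hSπ : ∀ a, S * π a = μ a • π a := by
    intro a
    rw [hSdef, Finset.sum_mul]
    rcases Fin.eq_zero_or_eq_succ a with rfl | ⟨j, rfl⟩
    · rw [Finset.sum_eq_zero, hμ]
      · simp
      · intro b _
        rw [smul_mul_assoc, horth _ _ (Fin.succ_ne_zero b), smul_zero]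
    · rw [Finset.sum_eq_single j]
      · rw [smul_mul_assoc, hidem]
        simp [hμ]
      · intro b _ hb
        rw [smul_mul_assoc, horth _ _ (fun h => hb (Fin.succ_injective p h)), smul_zero]
      · simp
  have hπS : ∀ a, π a * S = μ a • π a := by
    intro a
    rw [hSdef, Finset.mul_sum]
    rcases Fin.eq_zero_or_eq_succ a with rfl | ⟨j, rfl⟩
    · rw [Finset.sum_eq_zero, hμ]
      · simp
      · intro b _
        rw [mul_smul_comm, horth _ _ (Ne.symm (Fin.succ_ne_zero b)), smul_zero]
    · rw [Finset.sum_eq_single j]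
      · rw [mul_smul_comm, hidem]
        simp [hμ]
      · intro b _ hb
        rw [mul_smul_comm, horth _ _ (fun h => hb (Fin.succ_injective p h).symm), smul_zero]
      · simp
  have hcS : ∀ a, Commute S (π a) := fun a => (hSπ a).trans (hπS a).symm
  refine ⟨?_, ?_, ?_⟩
  · -- diagonalizability
    obtain ⟨P, hP, d, hd⟩ := aux_diag_spectral π μ hsum horth hidem
    exact ⟨P, hP, d, hSfull ▸ hd⟩
  · -- nilpotency
    set N : Matrix n n F := A ^ k - S with hN
    have hcN : ∀ a, Commute N (π a) := fun a => (hcAk a).sub_left (hcS a)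
    obtain ⟨m, hm⟩ : ∃ m : ℕ, m = t₀ + ∑ j, t j := ⟨_, rfl⟩
    refine ⟨m + 1, ?_⟩
    have h1 : N ^ (m + 1) = ∑ a : Fin (p + 1), N ^ (m + 1) * π a := by
      rw [← Finset.mul_sum, hsum, mul_one]
    rw [h1]
    apply Finset.sum_eq_zero
    intro a _
    have hpow : N ^ (m + 1) * π a = (N * π a) ^ (m + 1) := by
      rw [(hcN a).mul_pow, IsIdempotentElem.pow_succ_eq m (hidem a)]
    rw [hpow]
    rcases Fin.eq_zero_or_eq_succ a with rfl | ⟨j, rfl⟩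
    · -- zero block
      have hN0 : N * π 0 = A ^ k * π 0 := by
        rw [hN, sub_mul, hSπ 0]
        simp [hμ]
      rw [hN0, (hcAk 0).mul_pow, IsIdempotentElem.pow_succ_eq m (hidem 0), ← pow_mul]
      have hle : t₀ ≤ k * (m + 1) := le_trans (by omega) (Nat.le_mul_of_pos_left (m + 1) hk)
      rw [← pow_sub_mul_pow A hle, mul_assoc, ht₀, mul_zero]
    · -- nonzero blocks
      set lj := lam j with hlj
      have hNj : N * π j.succ = (A ^ k - lj ^ k • 1) * π j.succ := by
        rw [hN, sub_mul, sub_mul, hSπ, smul_mul_assoc, one_mul]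
        simp [hμ]
        rfl
      -- factor A^k - lj^k • 1 = (A - lj • 1) * G
      have hdvd : (X - C lj) ∣ (X ^ k - C (lj ^ k)) := by
        apply dvd_iff_isRoot.mpr
        simp [IsRoot]
      obtain ⟨g, hg⟩ := hdvd
      set B : Matrix n n F := A - lj • 1 with hB
      set G : Matrix n n F := aeval A g with hG
      have hBev : B = aeval A (X - C lj) := by
        rw [map_sub, aeval_X, aeval_C, hB, Algebra.algebraMap_eq_smul_one]
      have hfact : A ^ k - lj ^ k • 1 = B * G := by
        have := congrArg (aeval A) hg
        rw [map_sub, _root_.map_mul, aeval_X_pow, aeval_C, Algebra.algebraMap_eq_smul_one] at this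
        rw [this, hBev, hG]
      have hcBG : Commute B G := by
        rw [hBev, hG, Commute, SemiconjBy, ← _root_.map_mul, ← _root_.map_mul, mul_comm]
      have hcBπ : Commute B (π j.succ) := by
        rw [hB]
        exact (hcA j.succ).sub_left (Commute.smul_left (Commute.one_left _) lj)
      have hcGπ : Commute G (π j.succ) := by
        rw [hG, aeval_eq_sum_range]
        exact Commute.sum_left _ _ _ fun i _ =>
          Commute.smul_left ((hcA j.succ).pow_left i) _
      have hcBGπ : Commute (B * G) (π j.succ) := hcBπ.mul_left hcGπ
      rw [hNj, hfact, hcBGπ.mul_pow, IsIdempotentElem.pow_succ_eq m (hidem j.succ), hcBG.mul_pow]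
      have hle : t j ≤ m + 1 := by
        have : t j ≤ ∑ i, t i := Finset.single_le_sum (fun i _ => Nat.zero_le _) (Finset.mem_univ j)
        omega
      rw [mul_assoc, (hcGπ.pow_left (m + 1)).eq, ← mul_assoc,
        ← pow_sub_mul_pow B hle, mul_assoc (B ^ (m + 1 - t j)), htz j, mul_zero, zero_mul]
  · -- commutation
    rw [hSdef, Finset.sum_mul, Finset.mul_sum]
    exact Finset.sum_congr rfl fun j _ => by
      rw [smul_mul_assoc, mul_smul_comm, (hcAk j.succ).eq]
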